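/- Concave-convex regret decomposition, consumption part (Proposition C.2): Let g : ℝ^D → ℝ be L-Lipschitz with respect to the ℓ1 norm, where D is a finite index set. Fix a true transition function p★ and true consumptions c★_i : S × A → [0,1] for i ∈ D, estimates p̂ and (ĉ_i)_{i∈D}, and a bonus b : S × A → ℝ. Suppose a policy π_k and consumption functions c^{(k)}_i with |c^{(k)}_i(s,a) − ĉ_i(s,a)| ≤ b(s,a) satisfy g( (V_{c^{(k)}_i}^{π_k,p̂}(s0,1))_{i∈D} ) ≤ 0. Then g( (V_{c★_i}^{π_k,p★}(s0,1))_{i∈D} ) ≤ L · Σ_{i∈D} E^{π_k,p★}[ Σ_{h=1}^H | Bell_{c^{(k)}_i}^{π_k,p̂}(s_h, a_h, h) | | s_1 = s0 ], where the Bellman error for index i is taken with respect to the true pair (p★, c★_i). -/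

import Mathlib

open Finset

section MDPDefs

variable {S A : Type*} [Fintype S] [Fintype A]

/-- Expected cumulative sum of a step-dependent objective `φ h s a`, defined by
backward recursion on the number `n` of remaining steps, where `h` is the current stage. -/
noncomputable def EValAux (π : ℕ → S → PMF A) (p : S → A → PMF S)
    (φ : ℕ → S → A → ℝ) : ℕ → ℕ → S → ℝ
  | 0, _, _ => 0
  | n + 1, h, s =>
      ∑ a : A, (π h s a).toReal *
        (φ h s a + ∑ s' : S, (p s a s').toReal * EValAux π p φ n (h + 1) s')

/-- `EVal H π p φ h s = E^{π,p}[ Σ_{h'=h}^H φ(h', s_{h'}, a_{h'}) | s_h = s ]`. -/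
noncomputable def EVal (H : ℕ) (π : ℕ → S → PMF A) (p : S → A → PMF S)
    (φ : ℕ → S → A → ℝ) (h : ℕ) (s : S) : ℝ :=
  EValAux π p φ (H + 1 - h) h s

/-- Value function `V_m^{π,p}(s,h)` of the objective `m` for horizon `H`. -/
noncomputable def Vf (H : ℕ) (π : ℕ → S → PMF A) (p : S → A → PMF S)
    (m : S → A → ℝ) (h : ℕ) (s : S) : ℝ :=
  EVal H π p (fun _ s a => m s a) h s

/-- Q-function `Q_m^{π,p}(s,a,h)` of the objective `m` for horizon `H`. -/
noncomputable def Qf (H : ℕ) (π : ℕ → S → PMF A) (p : S → A → PMF S)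
    (m : S → A → ℝ) (h : ℕ) (s : S) (a : A) : ℝ :=
  m s a + ∑ s' : S, (p s a s').toReal * Vf H π p m (h + 1) s'

/-- Bellman error of the model `(p, m)` under policy `π`, with respect to the
true transition function `pstar` and true objective `mstar`. -/
noncomputable def Bell (H : ℕ) (π : ℕ → S → PMF A) (p : S → A → PMF S) (m : S → A → ℝ)
    (pstar : S → A → PMF S) (mstar : S → A → ℝ) (h : ℕ) (s : S) (a : A) : ℝ :=
  Qf H π p m h s a - (mstar s a + ∑ s' : S, (pstar s a s').toReal * Vf H π p m (h + 1) s')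

end MDPDefs

section AuxLemmas

variable {S A : Type*} [Fintype S] [Fintype A]

lemma evalAux_diff (π : ℕ → S → PMF A) (phat pstar : S → A → PMF S)
    (m mstar : S → A → ℝ) (H : ℕ) :
    ∀ n h, h + n = H + 1 → ∀ s : S,
      EValAux π phat (fun _ s a => m s a) n h s
        - EValAux π pstar (fun _ s a => mstar s a) n h s
      = EValAux π pstar (Bell H π phat m pstar mstar) n h s := by
  intro n
  induction n with
  | zero => intro h _ s; simp [EValAux]
  | succ n ih =>
    intro h hh s
    have hVf : ∀ s' : S, Vf H π phat m (h + 1) s'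
        = EValAux π phat (fun _ s a => m s a) n (h + 1) s' := by
      intro s'
      have : H + 1 - (h + 1) = n := by omega
      simp [Vf, EVal, this]
    have ih' : ∀ s' : S,
        EValAux π pstar (Bell H π phat m pstar mstar) n (h + 1) s'
        = EValAux π phat (fun _ s a => m s a) n (h + 1) s'
          - EValAux π pstar (fun _ s a => mstar s a) n (h + 1) s' := by
      intro s'; rw [ih (h + 1) (by omega) s']
    rw [EValAux, EValAux, EValAux, ← Finset.sum_sub_distrib]
    refine Finset.sum_congr rfl fun a _ => ?_
    rw [← mul_sub]
    congr 1
    simp only [Bell, Qf, hVf, ih', mul_sub, Finset.sum_sub_distrib]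
    ring

lemma abs_evalAux_le (π : ℕ → S → PMF A) (p : S → A → PMF S) (φ : ℕ → S → A → ℝ) :
    ∀ n h (s : S), |EValAux π p φ n h s|
      ≤ EValAux π p (fun h s a => |φ h s a|) n h s := by
  intro n
  induction n with
  | zero => intro h s; simp [EValAux]
  | succ n ih =>
    intro h s
    rw [EValAux, EValAux]
    refine (Finset.abs_sum_le_sum_abs _ _).trans (Finset.sum_le_sum fun a _ => ?_)
    rw [abs_mul, abs_of_nonneg ENNReal.toReal_nonneg]
    refine mul_le_mul_of_nonneg_left ?_ ENNReal.toReal_nonneg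
    refine (abs_add_le _ _).trans (add_le_add_right ?_ _)
    refine (Finset.abs_sum_le_sum_abs _ _).trans (Finset.sum_le_sum fun s' _ => ?_)
    rw [abs_mul, abs_of_nonneg ENNReal.toReal_nonneg]
    exact mul_le_mul_of_nonneg_left (ih (h + 1) s') ENNReal.toReal_nonneg

end AuxLemmas

/-- **Concave-convex regret decomposition, consumption part (Proposition C.2).** -/
theorem concave_convex_regret_decomposition_consumption
    {S A D : Type*} [Fintype S] [Fintype A] [Fintype D] [Nonempty S] [Nonempty A]
    (H : ℕ) (s0 : S) (L : ℝ)
    (g : (D → ℝ) → ℝ)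
    -- g is L-Lipschitz with respect to the ℓ1 norm
    (hg : ∀ x y : D → ℝ, |g x - g y| ≤ L * ∑ i : D, |x i - y i|)
    (pstar phat : S → A → PMF S)
    (cstar chat : D → S → A → ℝ) (b : S → A → ℝ)
    (hcstar : ∀ i s a, cstar i s a ∈ Set.Icc (0 : ℝ) 1)
    (πk : ℕ → S → PMF A) (ck : D → S → A → ℝ)
    (hck : ∀ i s a, |ck i s a - chat i s a| ≤ b s a)
    (hfeas_k : g (fun i => Vf H πk phat (ck i) 1 s0) ≤ 0) :
    g (fun i => Vf H πk pstar (cstar i) 1 s0)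
      ≤ L * ∑ i : D,
          EVal H πk pstar
            (fun h s a => |Bell H πk phat (ck i) pstar (cstar i) h s a|) 1 s0 := by
  classical
  have key : ∀ i : D,
      |Vf H πk pstar (cstar i) 1 s0 - Vf H πk phat (ck i) 1 s0|
        ≤ EVal H πk pstar
            (fun h s a => |Bell H πk phat (ck i) pstar (cstar i) h s a|) 1 s0 := by
    intro i
    have hd := evalAux_diff πk phat pstar (ck i) (cstar i) H H 1 (by omega) s0
    have h1 : Vf H πk phat (ck i) 1 s0 - Vf H πk pstar (cstar i) 1 s0
        = EValAux πk pstar (Bell H πk phat (ck i) pstar (cstar i)) H 1 s0 := by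
      simpa [Vf, EVal] using hd
    have h2 := abs_evalAux_le πk pstar (Bell H πk phat (ck i) pstar (cstar i)) H 1 s0
    rw [abs_sub_comm, h1]
    simpa [EVal] using h2
  rcases isEmpty_or_nonempty D with hD | hD
  · have : (fun i => Vf H πk pstar (cstar i) 1 s0)
        = (fun i => Vf H πk phat (ck i) 1 s0) := by
      funext i; exact absurd (IsEmpty.false i) not_false
    rw [this]
    simpa using hfeas_k
  · have hL : 0 ≤ L := by
      obtain ⟨i0⟩ := hD
      have := hg (fun _ => (0 : ℝ)) (fun i => if i = i0 then 1 else 0)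
      have hsum : ∑ i : D, |(fun _ => (0:ℝ)) i - (fun i => if i = i0 then (1:ℝ) else 0) i|
          = 1 := by
        simp [abs_sub_comm, apply_ite abs, Finset.sum_ite_eq']
      rw [hsum, mul_one] at this
      exact (abs_nonneg _).trans this
    calc g (fun i => Vf H πk pstar (cstar i) 1 s0)
        ≤ g (fun i => Vf H πk phat (ck i) 1 s0)
            + L * ∑ i : D, |Vf H πk pstar (cstar i) 1 s0 - Vf H πk phat (ck i) 1 s0| := by
          have := hg (fun i => Vf H πk pstar (cstar i) 1 s0)
            (fun i => Vf H πk phat (ck i) 1 s0)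
          have h' := (le_abs_self _).trans this
          linarith
      _ ≤ 0 + L * ∑ i : D,
            EVal H πk pstar
              (fun h s a => |Bell H πk phat (ck i) pstar (cstar i) h s a|) 1 s0 := by
          have : ∑ i : D, |Vf H πk pstar (cstar i) 1 s0 - Vf H πk phat (ck i) 1 s0|
              ≤ ∑ i : D, EVal H πk pstar
                (fun h s a => |Bell H πk phat (ck i) pstar (cstar i) h s a|) 1 s0 :=
            Finset.sum_le_sum fun i _ => key i
          have := mul_le_mul_of_nonneg_left this hL
          linarith [hfeas_k]
      _ = _ := by ring
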